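/- Assume the stepsizes are uniform, τ_v = τ for all v ∈ V, with τ < ‖A_v‖₂⁻² for every v ∈ V. Then for every X ∈ ℝ^{n×|V|}, F(X) − F(ΓX) ≥ (q/τ) Σ_{v∈V} ((ΓX)_v − x_v)ᵀ (I − τ A_vᵀA_v) ((ΓX)_v − x_v), and the right-hand side is nonnegative since each matrix I − τ A_vᵀA_v is positive definite. -/

import Mathlib

open Finset Filter Matrix

/-- Euclidean norm on `ℝ^k`. -/
noncomputable def enorm2 {k : ℕ} (x : Fin k → ℝ) : ℝ := Real.sqrt (∑ i, (x i) ^ 2)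

/-- ℓ¹ norm on `ℝ^k`. -/
noncomputable def onenorm {k : ℕ} (x : Fin k → ℝ) : ℝ := ∑ i, |x i|

/-- Operator norm of a matrix induced by Euclidean norms. -/
noncomputable def opNorm {m n : ℕ} (A : Matrix (Fin m) (Fin n) ℝ) : ℝ :=
  sSup {c : ℝ | ∃ z : Fin n → ℝ, z ≠ 0 ∧ c = enorm2 (A.mulVec z) / enorm2 z}

/-- Soft thresholding operator `η_α`, acting componentwise. -/
noncomputable def eta {k : ℕ} (α : ℝ) (x : Fin k → ℝ) : Fin k → ℝ :=
  fun i => if α < |x i| then Real.sign (x i) * (|x i| - α) else 0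

/-- The uniform-weights stochastic matrix adapted to the graph `E`
(`d` is the common degree). -/
noncomputable def Pmat {V : Type*} (E : V → V → Prop) [DecidableRel E] (d : ℕ) :
    V → V → ℝ := fun u w => if E u w then 1 / (d : ℝ) else 0

/-- Column `v` of `X Pᵀ`, i.e. the `P`-weighted average `∑ w P_{v,w} x_w`. -/
noncomputable def avg {n : ℕ} {V : Type*} [Fintype V] (P : V → V → ℝ)
    (X : V → Fin n → ℝ) : V → Fin n → ℝ := fun v i => ∑ w, P v w * X w i

/-- Frobenius norm of `X ∈ ℝ^{n×|V|}` (columns indexed by `V`). -/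
noncomputable def frobNorm {n : ℕ} {V : Type*} [Fintype V] (X : V → Fin n → ℝ) : ℝ :=
  Real.sqrt (∑ v, ∑ i, (X v i) ^ 2)

/-- The distributed Lasso functional `F`. -/
noncomputable def Flasso {n m : ℕ} {V : Type*} [Fintype V] (P : V → V → ℝ)
    (A : V → Matrix (Fin m) (Fin n) ℝ) (y : V → Fin m → ℝ)
    (q α : ℝ) (τ : V → ℝ) (X : V → Fin n → ℝ) : ℝ :=
  ∑ v, (q * enorm2 (y v - (A v).mulVec (X v)) ^ 2 + (2 * α / τ v) * onenorm (X v)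
    + ((1 - q) / τ v) * ∑ w, P v w * enorm2 (avg P X w - X v) ^ 2)

/-- The DISTA operator `Γ`, defined columnwise. -/
noncomputable def Gamma {n m : ℕ} {V : Type*} [Fintype V] (P : V → V → ℝ)
    (A : V → Matrix (Fin m) (Fin n) ℝ) (y : V → Fin m → ℝ)
    (q α : ℝ) (τ : V → ℝ) (X : V → Fin n → ℝ) : V → Fin n → ℝ :=
  fun v => eta α (fun i =>
    (1 - q) * avg P (avg P X) v i
      + q * (X v i + τ v * ((A v)ᵀ.mulVec (y v - (A v).mulVec (X v)) i)))

/-- The surrogate functional `F^S`. -/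
noncomputable def FS {n m : ℕ} {V : Type*} [Fintype V] (E : V → V → Prop) [DecidableRel E]
    (d : ℕ) (A : V → Matrix (Fin m) (Fin n) ℝ) (y : V → Fin m → ℝ)
    (q α : ℝ) (τ : V → ℝ) (X C B : V → Fin n → ℝ) : ℝ :=
  ∑ v, (q * enorm2 ((A v).mulVec (X v) - y v) ^ 2 + (2 * α / τ v) * onenorm (X v)
    + ((1 - q) / ((d : ℝ) * τ v)) *
        ∑ w ∈ Finset.univ.filter (fun w => E v w), enorm2 (X v - C w) ^ 2
    + (q / τ v) * enorm2 (X v - B v) ^ 2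
    - q * enorm2 ((A v).mulVec (X v - B v)) ^ 2)

section AuxLemmas

lemma dp_self_nonneg {k : ℕ} (u : Fin k → ℝ) : 0 ≤ u ⬝ᵥ u :=
  Finset.sum_nonneg fun _ _ => mul_self_nonneg _

lemma dp_self_pos {k : ℕ} {u : Fin k → ℝ} (hu : u ≠ 0) : 0 < u ⬝ᵥ u := by
  obtain ⟨i, hi⟩ : ∃ i, u i ≠ 0 := by
    by_contra h
    push_neg at h
    exact hu (funext fun i => h i)
  exact Finset.sum_pos' (fun j _ => mul_self_nonneg _)
    ⟨i, Finset.mem_univ i, mul_self_pos.mpr hi⟩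

lemma enorm2_sq_eq {k : ℕ} (u : Fin k → ℝ) : enorm2 u ^ 2 = u ⬝ᵥ u := by
  have h : 0 ≤ ∑ i, (u i) ^ 2 := Finset.sum_nonneg fun i _ => sq_nonneg _
  rw [enorm2, Real.sq_sqrt h]
  simp only [dotProduct, pow_two]

lemma enorm2_nonneg {k : ℕ} (u : Fin k → ℝ) : 0 ≤ enorm2 u := Real.sqrt_nonneg _

lemma dp_sub_sub {k : ℕ} (u w : Fin k → ℝ) :
    (u - w) ⬝ᵥ (u - w) = u ⬝ᵥ u - 2 * (u ⬝ᵥ w) + w ⬝ᵥ w := by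
  have h : ∀ i, (u i - w i) * (u i - w i)
      = u i * u i - 2 * (u i * w i) + w i * w i := fun i => by ring
  simp only [dotProduct, Pi.sub_apply, h, Finset.sum_add_distrib, Finset.sum_sub_distrib,
    ← Finset.mul_sum]

lemma dp_avg {n : ℕ} {V : Type*} [Fintype V] (P : V → V → ℝ)
    (X : V → Fin n → ℝ) (v : V) (z : Fin n → ℝ) :
    z ⬝ᵥ avg P X v = ∑ w, P v w * (z ⬝ᵥ X w) := by
  simp only [dotProduct, avg, Finset.mul_sum]
  rw [Finset.sum_comm]
  exact Finset.sum_congr rfl fun w _ => Finset.sum_congr rfl fun i _ => by ring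

lemma key_scalar {a c z : ℝ} (ha : 0 ≤ a) :
    0 ≤ ((if a < |c| then Real.sign c * (|c| - a) else 0) - c)
          * (z - (if a < |c| then Real.sign c * (|c| - a) else 0))
        + a * (|z| - |(if a < |c| then Real.sign c * (|c| - a) else 0)|) := by
  by_cases h : a < |c|
  · rw [if_pos h]
    rcases lt_trichotomy c 0 with hc | hc | hc
    · rw [Real.sign_of_neg hc, abs_of_neg hc] at *
      have h1 : (-1 : ℝ) * (-c - a) = c + a := by ring
      rw [h1]
      have h2 : c + a < 0 := by linarith
      rw [abs_of_neg h2]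
      nlinarith [neg_abs_le z]
    · exfalso; rw [hc] at h; simp at h; linarith
    · rw [Real.sign_of_pos hc, abs_of_pos hc] at *
      have h1 : (1 : ℝ) * (c - a) = c - a := by ring
      rw [h1]
      have h2 : 0 < c - a := by linarith
      rw [abs_of_pos h2]
      nlinarith [le_abs_self z]
  · rw [if_neg h]
    push_neg at h
    simp only [zero_sub, sub_zero, abs_zero]
    have h1 := abs_mul c z
    have h2 := le_abs_self (c * z)
    have h3 := neg_abs_le (c * z)
    have h4 := abs_nonneg z
    nlinarith
 
lemma prox_ineq {k : ℕ} {a : ℝ} (ha : 0 ≤ a) (c x : Fin k → ℝ) :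
    (eta a c - c) ⬝ᵥ (eta a c - c) + (x - eta a c) ⬝ᵥ (x - eta a c) + 2 * a * onenorm (eta a c)
      ≤ (x - c) ⬝ᵥ (x - c) + 2 * a * onenorm x := by
  simp only [dotProduct, onenorm, Finset.mul_sum, Pi.sub_apply]
  rw [← Finset.sum_add_distrib, ← Finset.sum_add_distrib, ← Finset.sum_add_distrib]
  apply Finset.sum_le_sum
  intro i _
  have h := key_scalar (a := a) (c := c i) (z := x i) ha
  simp only [eta]
  set t : ℝ := if a < |c i| then Real.sign (c i) * (|c i| - a) else 0 with htdef
  nlinarith [h]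

lemma percol {n m : ℕ} (A : Matrix (Fin m) (Fin n) ℝ) (yv : Fin m → ℝ)
    (x a t : Fin n → ℝ) (q al τ CX CT : ℝ)
    (hal : 0 ≤ al) (hτ : 0 < τ)
    (ht : t = eta al ((1 - q) • a + q • x + (q * τ) • (Aᵀ *ᵥ (yv - A *ᵥ x))))
    (hC : CX - CT = x ⬝ᵥ x - t ⬝ᵥ t - 2 * (x ⬝ᵥ a) + 2 * (t ⬝ᵥ a)) :
    q * ((yv - A *ᵥ t) ⬝ᵥ (yv - A *ᵥ t)) + 2 * al / τ * onenorm t + (1 - q) / τ * CT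
      + q / τ * ((t - x) ⬝ᵥ (t - x)) - q * ((A *ᵥ (t - x)) ⬝ᵥ (A *ᵥ (t - x)))
    ≤ q * ((yv - A *ᵥ x) ⬝ᵥ (yv - A *ᵥ x)) + 2 * al / τ * onenorm x + (1 - q) / τ * CX := by
  have hτne : τ ≠ 0 := ne_of_gt hτ
  set g := Aᵀ *ᵥ (yv - A *ᵥ x) with hg
  set c := (1 - q) • a + q • x + (q * τ) • g with hc
  have hprox := prox_ineq hal c x
  rw [← ht] at hprox
  have hxc : x ⬝ᵥ c = (1 - q) * (x ⬝ᵥ a) + q * (x ⬝ᵥ x)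
      + q * τ * ((A *ᵥ x) ⬝ᵥ (yv - A *ᵥ x)) := by
    rw [hc, hg]
    simp only [dotProduct_add, dotProduct_smul, smul_eq_mul]
    rw [Matrix.dotProduct_mulVec, Matrix.vecMul_transpose]
  have htc : t ⬝ᵥ c = (1 - q) * (t ⬝ᵥ a) + q * (t ⬝ᵥ x)
      + q * τ * ((A *ᵥ t) ⬝ᵥ (yv - A *ᵥ x)) := by
    rw [hc, hg]
    simp only [dotProduct_add, dotProduct_smul, smul_eq_mul]
    rw [Matrix.dotProduct_mulVec, Matrix.vecMul_transpose]
  have hkey : (x - c) ⬝ᵥ (x - c) - (t - c) ⬝ᵥ (t - c)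
      = x ⬝ᵥ x - t ⬝ᵥ t
        - 2 * ((1 - q) * (x ⬝ᵥ a) + q * (x ⬝ᵥ x) + q * τ * ((A *ᵥ x) ⬝ᵥ (yv - A *ᵥ x)))
        + 2 * ((1 - q) * (t ⬝ᵥ a) + q * (t ⬝ᵥ x) + q * τ * ((A *ᵥ t) ⬝ᵥ (yv - A *ᵥ x))) := by
    rw [dp_sub_sub x c, dp_sub_sub t c, hxc, htc]; ring
  have e5 : (A *ᵥ x) ⬝ᵥ (yv - A *ᵥ x)
      = yv ⬝ᵥ (A *ᵥ x) - (A *ᵥ x) ⬝ᵥ (A *ᵥ x) := by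
    rw [dotProduct_sub, dotProduct_comm (A *ᵥ x) yv]
  have e6 : (A *ᵥ t) ⬝ᵥ (yv - A *ᵥ x)
      = yv ⬝ᵥ (A *ᵥ t) - (A *ᵥ t) ⬝ᵥ (A *ᵥ x) := by
    rw [dotProduct_sub, dotProduct_comm (A *ᵥ t) yv]
  rw [e5, e6] at hkey
  have e1 := dp_sub_sub yv (A *ᵥ x)
  have e2 := dp_sub_sub yv (A *ᵥ t)
  have e3 := dp_sub_sub t x
  rw [dotProduct_comm t x] at e3
  have e4 : (A *ᵥ (t - x)) ⬝ᵥ (A *ᵥ (t - x))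
      = (A *ᵥ t) ⬝ᵥ (A *ᵥ t) - 2 * ((A *ᵥ t) ⬝ᵥ (A *ᵥ x)) + (A *ᵥ x) ⬝ᵥ (A *ᵥ x) := by
    rw [Matrix.mulVec_sub]; exact dp_sub_sub _ _
  have E0 : τ * q * ((yv - A *ᵥ x) ⬝ᵥ (yv - A *ᵥ x)) + 2 * al * onenorm x + (1 - q) * CX
      - (τ * q * ((yv - A *ᵥ t) ⬝ᵥ (yv - A *ᵥ t)) + 2 * al * onenorm t + (1 - q) * CT
        + q * ((t - x) ⬝ᵥ (t - x)) - τ * q * ((A *ᵥ (t - x)) ⬝ᵥ (A *ᵥ (t - x))))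
      = ((x - c) ⬝ᵥ (x - c) + 2 * al * onenorm x)
        - ((t - c) ⬝ᵥ (t - c) + 2 * al * onenorm t) := by
    rw [e1, e2, e3, e4]
    linear_combination (1 - q) * hC - hkey + 2 * q * dotProduct_comm x t
  have hclean : τ * q * ((yv - A *ᵥ t) ⬝ᵥ (yv - A *ᵥ t)) + 2 * al * onenorm t + (1 - q) * CT
      + q * ((t - x) ⬝ᵥ (t - x)) - τ * q * ((A *ᵥ (t - x)) ⬝ᵥ (A *ᵥ (t - x)))
      ≤ τ * q * ((yv - A *ᵥ x) ⬝ᵥ (yv - A *ᵥ x)) + 2 * al * onenorm x + (1 - q) * CX := by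
    nlinarith [hprox, dp_self_nonneg (x - t), E0]
  have l : τ * (q * ((yv - A *ᵥ t) ⬝ᵥ (yv - A *ᵥ t)) + 2 * al / τ * onenorm t
        + (1 - q) / τ * CT + q / τ * ((t - x) ⬝ᵥ (t - x))
        - q * ((A *ᵥ (t - x)) ⬝ᵥ (A *ᵥ (t - x))))
      = τ * q * ((yv - A *ᵥ t) ⬝ᵥ (yv - A *ᵥ t)) + 2 * al * onenorm t + (1 - q) * CT
        + q * ((t - x) ⬝ᵥ (t - x)) - τ * q * ((A *ᵥ (t - x)) ⬝ᵥ (A *ᵥ (t - x))) := by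
    field_simp
  have r : τ * (q * ((yv - A *ᵥ x) ⬝ᵥ (yv - A *ᵥ x)) + 2 * al / τ * onenorm x
        + (1 - q) / τ * CX)
      = τ * q * ((yv - A *ᵥ x) ⬝ᵥ (yv - A *ᵥ x)) + 2 * al * onenorm x + (1 - q) * CX := by
    field_simp
  refine le_of_mul_le_mul_left ?_ hτ
  rw [l, r]
  exact hclean

end AuxLemmas

/-- Quantified descent. With uniform stepsizes `τ < ‖A_v‖₂⁻²` for every `v`,
for every `X`,
`F(X) − F(ΓX) ≥ (q/τ) ∑_v ((ΓX)_v − x_v)ᵀ (I − τ A_vᵀA_v) ((ΓX)_v − x_v)`,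
each matrix `I − τ A_vᵀA_v` is positive definite, and the right-hand side is nonnegative. -/
theorem lasso_descent_bound
    {n m d : ℕ} {V : Type*} [Fintype V] [DecidableEq V] [Nonempty V]
    (E : V → V → Prop) [DecidableRel E]
    (hself : ∀ v, E v v) (hsymm : ∀ u v, E u v → E v u)
    (hreg : ∀ v, (Finset.univ.filter (fun w => E v w)).card = d)
    (A : V → Matrix (Fin m) (Fin n) ℝ) (y : V → Fin m → ℝ)
    (q α : ℝ) (hq0 : 0 < q) (hq1 : q < 1) (hα : 0 < α)
    (τ : ℝ) (hτpos : 0 < τ)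
    (hτ : ∀ v, τ < (opNorm (A v) ^ 2)⁻¹) :
    (∀ X : V → Fin n → ℝ,
        (q / τ) * ∑ v, dotProduct
            (Gamma (Pmat E d) A y q α (fun _ => τ) X v - X v)
            (((1 : Matrix (Fin n) (Fin n) ℝ) - τ • ((A v)ᵀ * A v)).mulVec
              (Gamma (Pmat E d) A y q α (fun _ => τ) X v - X v))
          ≤ Flasso (Pmat E d) A y q α (fun _ => τ) X
            - Flasso (Pmat E d) A y q α (fun _ => τ)
                (Gamma (Pmat E d) A y q α (fun _ => τ) X))
      ∧ (∀ v : V, ((1 : Matrix (Fin n) (Fin n) ℝ) - τ • ((A v)ᵀ * A v)).PosDef)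
      ∧ ∀ X : V → Fin n → ℝ,
          0 ≤ (q / τ) * ∑ v, dotProduct
            (Gamma (Pmat E d) A y q α (fun _ => τ) X v - X v)
            (((1 : Matrix (Fin n) (Fin n) ℝ) - τ • ((A v)ᵀ * A v)).mulVec
              (Gamma (Pmat E d) A y q α (fun _ => τ) X v - X v)) := by
  obtain ⟨v0⟩ := (inferInstance : Nonempty V)
  have hdpos : 0 < d := by
    rw [← hreg v0]
    exact Finset.card_pos.mpr ⟨v0, by simp [hself v0]⟩
  have hdR : (0 : ℝ) < (d : ℝ) := Nat.cast_pos.mpr hdpos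
  have hτne : τ ≠ 0 := ne_of_gt hτpos
  set P := Pmat E d with hPdef
  have Psymm : ∀ u w, P u w = P w u := by
    intro u w
    rw [hPdef]
    simp only [Pmat]
    by_cases h : E u w
    · rw [if_pos h, if_pos (hsymm _ _ h)]
    · rw [if_neg h, if_neg fun h' => h (hsymm _ _ h')]
  have Prow : ∀ u, ∑ w, P u w = 1 := by
    intro u
    rw [hPdef]
    simp only [Pmat]
    rw [← Finset.sum_filter, Finset.sum_const, hreg u, nsmul_eq_mul, mul_one_div,
      div_self (ne_of_gt hdR)]
  -- positivity facts for the matrices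
  have hop : ∀ (v : V) (z : Fin n → ℝ), z ≠ 0 →
      τ * ((A v *ᵥ z) ⬝ᵥ (A v *ᵥ z)) < z ⬝ᵥ z := by
    intro v z hz
    set N := opNorm (A v) with hN
    have hzpos : (0 : ℝ) < z ⬝ᵥ z := dp_self_pos hz
    have hsum : z ⬝ᵥ z = ∑ i, z i ^ 2 := by simp [dotProduct, pow_two]
    have hez : 0 < enorm2 z := by
      rw [enorm2]
      apply Real.sqrt_pos.mpr
      rw [← hsum]; exact hzpos
    have hCS : ∀ u : Fin n → ℝ,
        enorm2 (A v *ᵥ u) ≤ Real.sqrt (∑ i, ∑ j, (A v i j) ^ 2) * enorm2 u := by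
      intro u
      have h1 : ∑ i, ((A v *ᵥ u) i) ^ 2 ≤ (∑ i, ∑ j, (A v i j) ^ 2) * ∑ j, (u j) ^ 2 := by
        rw [Finset.sum_mul]
        apply Finset.sum_le_sum
        intro i _
        have h2 := Finset.sum_mul_sq_le_sq_mul_sq Finset.univ (fun j => A v i j) u
        simpa [Matrix.mulVec, dotProduct] using h2
      calc enorm2 (A v *ᵥ u) = Real.sqrt (∑ i, ((A v *ᵥ u) i) ^ 2) := rfl
        _ ≤ Real.sqrt ((∑ i, ∑ j, (A v i j) ^ 2) * ∑ j, (u j) ^ 2) := Real.sqrt_le_sqrt h1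
        _ = Real.sqrt (∑ i, ∑ j, (A v i j) ^ 2) * enorm2 u := by
            rw [Real.sqrt_mul (by positivity)]; rfl
    have hbdd : BddAbove {c : ℝ | ∃ z : Fin n → ℝ, z ≠ 0 ∧ c = enorm2 (A v *ᵥ z) / enorm2 z} := by
      refine ⟨Real.sqrt (∑ i, ∑ j, (A v i j) ^ 2), ?_⟩
      rintro cc ⟨u, hu, rfl⟩
      have hupos : 0 < enorm2 u := by
        rw [enorm2]
        apply Real.sqrt_pos.mpr
        have h := dp_self_pos hu
        have h2 : u ⬝ᵥ u = ∑ i, u i ^ 2 := by simp [dotProduct, pow_two]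
        rw [← h2]; exact h
      rw [div_le_iff₀ hupos]
      exact hCS u
    have hle : enorm2 (A v *ᵥ z) / enorm2 z ≤ N := le_csSup hbdd ⟨z, hz, rfl⟩
    have h2 : enorm2 (A v *ᵥ z) ≤ N * enorm2 z := (div_le_iff₀ hez).mp hle
    have hN0 : 0 ≤ N := le_trans (div_nonneg (enorm2_nonneg _) (enorm2_nonneg _)) hle
    have hNpos : 0 < N := by
      rcases hN0.lt_or_eq with h | h
      · exact h
      · exfalso
        have h3 := hτ v
        rw [← hN, ← h] at h3
        norm_num at h3
        linarith
    have hτN : τ * N ^ 2 < 1 := by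
      have h3 := hτ v
      rw [← hN] at h3
      have hN2 : 0 < N ^ 2 := pow_pos hNpos 2
      calc τ * N ^ 2 < (N ^ 2)⁻¹ * N ^ 2 := mul_lt_mul_of_pos_right h3 hN2
        _ = 1 := inv_mul_cancel₀ (ne_of_gt hN2)
    have hAz : (A v *ᵥ z) ⬝ᵥ (A v *ᵥ z) ≤ N ^ 2 * (z ⬝ᵥ z) := by
      rw [← enorm2_sq_eq, ← enorm2_sq_eq]
      calc enorm2 (A v *ᵥ z) ^ 2 ≤ (N * enorm2 z) ^ 2 :=
            pow_le_pow_left₀ (enorm2_nonneg _) h2 2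
        _ = N ^ 2 * enorm2 z ^ 2 := by ring
    nlinarith [dp_self_nonneg (A v *ᵥ z)]
  have hdp : ∀ (v : V) (u : Fin n → ℝ),
      u ⬝ᵥ (((1 : Matrix (Fin n) (Fin n) ℝ) - τ • ((A v)ᵀ * A v)) *ᵥ u)
        = u ⬝ᵥ u - τ * ((A v *ᵥ u) ⬝ᵥ (A v *ᵥ u)) := by
    intro v u
    rw [Matrix.sub_mulVec, Matrix.one_mulVec, dotProduct_sub, Matrix.smul_mulVec,
      dotProduct_smul, smul_eq_mul, ← Matrix.mulVec_mulVec, Matrix.dotProduct_mulVec,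
      Matrix.vecMul_transpose]
  have hstar : ∀ (u : Fin n → ℝ), star u = u := fun u => funext fun i => star_trivial _
  have hposdef : ∀ v : V, ((1 : Matrix (Fin n) (Fin n) ℝ) - τ • ((A v)ᵀ * A v)).PosDef := by
    intro v
    rw [Matrix.posDef_iff_dotProduct_mulVec]
    constructor
    · have h1 := Matrix.isHermitian_conjTranspose_mul_self (A v)
      rw [Matrix.conjTranspose_eq_transpose_of_trivial] at h1
      have h2 : (τ • ((A v)ᵀ * A v)).IsHermitian := by
        show (τ • ((A v)ᵀ * A v))ᴴ = _
        rw [Matrix.conjTranspose_smul, star_trivial, h1.eq]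
      exact Matrix.isHermitian_one.sub h2
    · intro x hx
      rw [hstar x, hdp v x]
      linarith [hop v x hx]
  refine ⟨?_, hposdef, ?_⟩
  · -- main descent inequality
    intro X
    set T := Gamma P A y q α (fun _ => τ) X with hTdef
    simp only [Flasso, enorm2_sq_eq]
    set xb := avg P X with hxbdef
    set tb := avg P T with htbdef
    have hLHS : (q / τ) * ∑ v, (T v - X v) ⬝ᵥ
          (((1 : Matrix (Fin n) (Fin n) ℝ) - τ • ((A v)ᵀ * A v)) *ᵥ (T v - X v))
        = ∑ v, (q / τ * ((T v - X v) ⬝ᵥ (T v - X v))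
            - q * ((A v *ᵥ (T v - X v)) ⬝ᵥ (A v *ᵥ (T v - X v)))) := by
      rw [Finset.mul_sum]
      refine Finset.sum_congr rfl fun v _ => ?_
      rw [hdp v]
      field_simp
    rw [hLHS]
    have hTv : ∀ v, T v = eta α ((1 - q) • avg P xb v + q • X v
        + (q * τ) • ((A v)ᵀ *ᵥ (y v - A v *ᵥ X v))) := by
      intro v
      have harg : (fun i => (1 - q) * avg P (avg P X) v i
            + q * (X v i + τ * ((A v)ᵀ *ᵥ (y v - A v *ᵥ X v)) i))
          = ((1 - q) • avg P xb v + q • X v + (q * τ) • ((A v)ᵀ *ᵥ (y v - A v *ᵥ X v))) := by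
        funext i
        simp only [Pi.add_apply, Pi.smul_apply, smul_eq_mul, ← hxbdef]
        ring
      rw [hTdef]
      exact congrArg (eta α) harg
    have hCv : ∀ v, (∑ w, P v w * ((xb w - X v) ⬝ᵥ (xb w - X v)))
        - (∑ w, P v w * ((xb w - T v) ⬝ᵥ (xb w - T v)))
        = X v ⬝ᵥ X v - T v ⬝ᵥ T v - 2 * (X v ⬝ᵥ avg P xb v) + 2 * (T v ⬝ᵥ avg P xb v) := by
      intro v
      rw [dp_avg P xb v (X v), dp_avg P xb v (T v), ← Finset.sum_sub_distrib]
      have h : ∀ w, P v w * ((xb w - X v) ⬝ᵥ (xb w - X v))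
            - P v w * ((xb w - T v) ⬝ᵥ (xb w - T v))
          = (P v w * (X v ⬝ᵥ X v) - P v w * (T v ⬝ᵥ T v))
            - 2 * (P v w * (X v ⬝ᵥ xb w)) + 2 * (P v w * (T v ⬝ᵥ xb w)) := by
        intro w
        rw [dp_sub_sub (xb w) (X v), dp_sub_sub (xb w) (T v),
          dotProduct_comm (xb w) (X v), dotProduct_comm (xb w) (T v)]
        ring
      rw [Finset.sum_congr rfl fun w _ => h w]
      rw [Finset.sum_add_distrib, Finset.sum_sub_distrib, Finset.sum_sub_distrib,
        ← Finset.sum_mul, ← Finset.sum_mul, ← Finset.mul_sum, ← Finset.mul_sum,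
        Prow v]
      ring
    have keyw : ∀ (cvec : Fin n → ℝ) (w : V),
        ∑ v, P w v * ((cvec - T v) ⬝ᵥ (cvec - T v))
          = (cvec - tb w) ⬝ᵥ (cvec - tb w)
            + ∑ v, P w v * ((tb w - T v) ⬝ᵥ (tb w - T v)) := by
      intro cvec w
      have h4 := dp_avg P T w (cvec - tb w)
      rw [← htbdef] at h4
      have h : ∀ v, P w v * ((cvec - T v) ⬝ᵥ (cvec - T v))
          = P w v * ((tb w - T v) ⬝ᵥ (tb w - T v))
            + P w v * (cvec ⬝ᵥ cvec) - P w v * (tb w ⬝ᵥ tb w)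
            - 2 * (P w v * ((cvec - tb w) ⬝ᵥ T v)) := by
        intro v
        have h1 := dp_sub_sub cvec (T v)
        have h2 := dp_sub_sub (tb w) (T v)
        have h3 := sub_dotProduct cvec (tb w) (T v)
        linear_combination h1 - P w v * h1 + P w v * h1 - P w v * h2 + P w v * h2 - h2 + h2 - h1 + P w v * h1 - P w v * h2 + 2 * P w v * h3
      rw [Finset.sum_congr rfl fun v _ => h v]
      rw [Finset.sum_sub_distrib, Finset.sum_sub_distrib, Finset.sum_add_distrib,
        ← Finset.sum_mul, ← Finset.sum_mul, ← Finset.mul_sum, ← h4, Prow w,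
        dp_sub_sub cvec (tb w), sub_dotProduct]
      ring
    have hswap : ∀ (Z : V → Fin n → ℝ),
        ∑ v, ∑ w, P v w * ((Z w - T v) ⬝ᵥ (Z w - T v))
          = ∑ w, ∑ v, P w v * ((Z w - T v) ⬝ᵥ (Z w - T v)) := by
      intro Z
      rw [Finset.sum_comm]
      exact Finset.sum_congr rfl fun w _ => Finset.sum_congr rfl fun v _ => by rw [Psymm v w]
    have hcons : ∑ v, ∑ w, P v w * ((tb w - T v) ⬝ᵥ (tb w - T v))
        ≤ ∑ v, ∑ w, P v w * ((xb w - T v) ⬝ᵥ (xb w - T v)) := by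
      rw [hswap tb, hswap xb]
      apply Finset.sum_le_sum
      intro w _
      rw [keyw (xb w) w]
      linarith [dp_self_nonneg (xb w - tb w)]
    have hsum : ∑ v, (q * ((y v - A v *ᵥ T v) ⬝ᵥ (y v - A v *ᵥ T v)) + 2 * α / τ * onenorm (T v)
          + (1 - q) / τ * ∑ w, P v w * ((xb w - T v) ⬝ᵥ (xb w - T v))
          + (q / τ * ((T v - X v) ⬝ᵥ (T v - X v))
            - q * ((A v *ᵥ (T v - X v)) ⬝ᵥ (A v *ᵥ (T v - X v)))))
        ≤ ∑ v, (q * ((y v - A v *ᵥ X v) ⬝ᵥ (y v - A v *ᵥ X v)) + 2 * α / τ * onenorm (X v)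
          + (1 - q) / τ * ∑ w, P v w * ((xb w - X v) ⬝ᵥ (xb w - X v))) := by
      apply Finset.sum_le_sum
      intro v _
      have hp := percol (A v) (y v) (X v) (avg P xb v) (T v) q α τ
        (∑ w, P v w * ((xb w - X v) ⬝ᵥ (xb w - X v)))
        (∑ w, P v w * ((xb w - T v) ⬝ᵥ (xb w - T v)))
        hα.le hτpos (hTv v) (hCv v)
      linarith [hp]
    have eq1 : ∑ v, (q * ((y v - A v *ᵥ T v) ⬝ᵥ (y v - A v *ᵥ T v)) + 2 * α / τ * onenorm (T v)
          + (1 - q) / τ * ∑ w, P v w * ((xb w - T v) ⬝ᵥ (xb w - T v))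
          + (q / τ * ((T v - X v) ⬝ᵥ (T v - X v))
            - q * ((A v *ᵥ (T v - X v)) ⬝ᵥ (A v *ᵥ (T v - X v)))))
        = (∑ v, (q * ((y v - A v *ᵥ T v) ⬝ᵥ (y v - A v *ᵥ T v)) + 2 * α / τ * onenorm (T v)))
          + (1 - q) / τ * (∑ v, ∑ w, P v w * ((xb w - T v) ⬝ᵥ (xb w - T v)))
          + ∑ v, (q / τ * ((T v - X v) ⬝ᵥ (T v - X v))
            - q * ((A v *ᵥ (T v - X v)) ⬝ᵥ (A v *ᵥ (T v - X v)))) := by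
      rw [Finset.mul_sum, ← Finset.sum_add_distrib, ← Finset.sum_add_distrib]
    have eq2 : ∑ v, (q * ((y v - A v *ᵥ T v) ⬝ᵥ (y v - A v *ᵥ T v)) + 2 * α / τ * onenorm (T v)
          + (1 - q) / τ * ∑ w, P v w * ((tb w - T v) ⬝ᵥ (tb w - T v)))
        = (∑ v, (q * ((y v - A v *ᵥ T v) ⬝ᵥ (y v - A v *ᵥ T v)) + 2 * α / τ * onenorm (T v)))
          + (1 - q) / τ * (∑ v, ∑ w, P v w * ((tb w - T v) ⬝ᵥ (tb w - T v))) := by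
      rw [Finset.mul_sum, ← Finset.sum_add_distrib]
    have hconsS : (1 - q) / τ * (∑ v, ∑ w, P v w * ((tb w - T v) ⬝ᵥ (tb w - T v)))
        ≤ (1 - q) / τ * (∑ v, ∑ w, P v w * ((xb w - T v) ⬝ᵥ (xb w - T v))) :=
      mul_le_mul_of_nonneg_left hcons (div_nonneg (by linarith) hτpos.le)
    linarith [hsum, eq1, eq2, hconsS]
  · intro X
    apply mul_nonneg (div_nonneg hq0.le hτpos.le)
    apply Finset.sum_nonneg
    intro v _
    by_cases h : Gamma P A y q α (fun _ => τ) X v - X v = 0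
    · rw [h]
      simp
    · have h2 := (hposdef v).dotProduct_mulVec_pos h
      rw [hstar] at h2
      exact le_of_lt h2
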